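/- arXiv:1709.10334 — 5 statements merged into one kernel-verified Lean document; each statement's English description precedes it below -/
import Mathlib

section
/- Let F be a field, n ≥ 1, and let (X,Y) and (X',Y') be pairs of n×n matrices over F. Then (X,Y) and (X',Y') are similar (i.e., there is a nonsingular n×n matrix S with S^{-1}XS = X' and S^{-1}YS = Y') if and only if the pairs of 5n×5n matrices (J, K_{X,Y}) and (J, K_{X',Y'}) are similar (i.e., there is a nonsingular 5n×5n matrix R with R^{-1}JR = J and R^{-1}K_{X,Y}R = K_{X',Y'}). -/
/-- The `5n × 5n` matrix `J`, partitioned into `n × n` blocks, with identity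
blocks in block positions `(1,2)`, `(2,3)`, `(3,4)` (1-indexed) and zero blocks
elsewhere.  Rows and columns are indexed by `Fin 5 × Fin n`, the first
component being the block index. -/
def Jmat (F : Type*) [Field F] (n : ℕ) :
    Matrix (Fin 5 × Fin n) (Fin 5 × Fin n) F :=
  Matrix.of fun p q =>
    if (p.1 = 0 ∧ q.1 = 1) ∨ (p.1 = 1 ∧ q.1 = 2) ∨ (p.1 = 2 ∧ q.1 = 3) then
      (1 : Matrix (Fin n) (Fin n) F) p.2 q.2
    else 0

/-- The `5n × 5n` matrix `K_{X,Y}`, partitioned into `n × n` blocks, with the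
block `X` in block positions `(1,3)` and `(2,4)`, the block `Y` in position
`(1,5)`, the identity block in position `(5,4)`, and zero blocks elsewhere. -/
def Kmat {F : Type*} [Field F] {n : ℕ} (X Y : Matrix (Fin n) (Fin n) F) :
    Matrix (Fin 5 × Fin n) (Fin 5 × Fin n) F :=
  Matrix.of fun p q =>
    if (p.1 = 0 ∧ q.1 = 2) ∨ (p.1 = 1 ∧ q.1 = 3) then X p.2 q.2
    else if p.1 = 0 ∧ q.1 = 4 then Y p.2 q.2
    else if p.1 = 4 ∧ q.1 = 3 then (1 : Matrix (Fin n) (Fin n) F) p.2 q.2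
    else 0

section Aux

variable {F : Type*} [Field F] {n : ℕ}

/-- The block form of `Jmat`, as a `5 × 5` matrix of `n × n` blocks. -/
def J5 (F : Type*) [Field F] (n : ℕ) : Matrix (Fin 5) (Fin 5) (Matrix (Fin n) (Fin n) F) :=
  Matrix.of fun i j =>
    if (i = 0 ∧ j = 1) ∨ (i = 1 ∧ j = 2) ∨ (i = 2 ∧ j = 3) then 1 else 0

/-- The block form of `Kmat`, as a `5 × 5` matrix of `n × n` blocks. -/
def K5 (X Y : Matrix (Fin n) (Fin n) F) : Matrix (Fin 5) (Fin 5) (Matrix (Fin n) (Fin n) F) :=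
  Matrix.of fun i j =>
    if (i = 0 ∧ j = 2) ∨ (i = 1 ∧ j = 3) then X
    else if i = 0 ∧ j = 4 then Y
    else if i = 4 ∧ j = 3 then 1
    else 0

/-- The ring equivalence between `5 × 5` matrices of `n × n` blocks and
`5n × 5n` matrices. -/
def ee (F : Type*) [Field F] (n : ℕ) :
    Matrix (Fin 5) (Fin 5) (Matrix (Fin n) (Fin n) F) ≃+*
      Matrix (Fin 5 × Fin n) (Fin 5 × Fin n) F :=
  Matrix.compRingEquiv (Fin 5) (Fin n) F

lemma ee_apply (M : Matrix (Fin 5) (Fin 5) (Matrix (Fin n) (Fin n) F)) (p q : Fin 5 × Fin n) :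
    ee F n M p q = M p.1 q.1 p.2 q.2 := rfl

lemma eeJ : ee F n (J5 F n) = Jmat F n := by
  ext ⟨i, p⟩ ⟨j, q⟩
  simp only [ee_apply, J5, Jmat, Matrix.of_apply]
  split_ifs <;> simp

lemma eeK (X Y : Matrix (Fin n) (Fin n) F) : ee F n (K5 X Y) = Kmat X Y := by
  ext ⟨i, p⟩ ⟨j, q⟩
  simp only [ee_apply, K5, Kmat, Matrix.of_apply]
  split_ifs <;> simp

lemma conj_of_comm {m : Type*} [Fintype m] [DecidableEq m] {R M N : Matrix m m F}
    (hR : IsUnit R) (h : M * R = R * N) : R⁻¹ * M * R = N := by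
  rw [mul_assoc, h, ← mul_assoc, Matrix.nonsing_inv_mul R ((Matrix.isUnit_iff_isUnit_det R).mp hR),
    one_mul]

lemma comm_of_conj {m : Type*} [Fintype m] [DecidableEq m] {R M N : Matrix m m F}
    (hR : IsUnit R) (h : R⁻¹ * M * R = N) : M * R = R * N := by
  rw [← h, ← mul_assoc, ← mul_assoc,
    Matrix.mul_nonsing_inv R ((Matrix.isUnit_iff_isUnit_det R).mp hR), one_mul]

end Aux

/-- `(X, Y)` and `(X', Y')` are similar (there is a nonsingular matrix `S`
with `S⁻¹XS = X'` and `S⁻¹YS = Y'`) if and only if the pairs of commuting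
nilpotent `5n × 5n` matrices `(J, K_{X,Y})` and `(J, K_{X',Y'})` are similar. -/
theorem similar_iff_JK_similar (F : Type*) [Field F] (n : ℕ) (hn : 1 ≤ n)
    (X Y X' Y' : Matrix (Fin n) (Fin n) F) :
    (∃ S : Matrix (Fin n) (Fin n) F, IsUnit S ∧
        S⁻¹ * X * S = X' ∧ S⁻¹ * Y * S = Y') ↔
    (∃ R : Matrix (Fin 5 × Fin n) (Fin 5 × Fin n) F, IsUnit R ∧
        R⁻¹ * Jmat F n * R = Jmat F n ∧ R⁻¹ * Kmat X Y * R = Kmat X' Y') := by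
  constructor
  · rintro ⟨S, hS, hX, hY⟩
    have hSd : IsUnit S.det := (Matrix.isUnit_iff_isUnit_det S).mp hS
    -- the block-diagonal matrix with `S` in every diagonal block
    set D : Matrix (Fin 5) (Fin 5) (Matrix (Fin n) (Fin n) F) :=
      Matrix.diagonal (fun _ => S) with hD
    have hDunit : IsUnit D := by
      refine isUnit_iff_exists.mpr ⟨Matrix.diagonal (fun _ => S⁻¹), ?_, ?_⟩
      · rw [hD, Matrix.diagonal_mul_diagonal]
        simp [Matrix.mul_nonsing_inv S hSd]
      · rw [hD, Matrix.diagonal_mul_diagonal]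
        simp [Matrix.nonsing_inv_mul S hSd]
    refine ⟨ee F n D, hDunit.map (ee F n), ?_, ?_⟩
    · refine conj_of_comm (hDunit.map (ee F n)) ?_
      rw [← eeJ, ← map_mul, ← map_mul]
      congr 1
      ext i j
      rw [Matrix.mul_diagonal, Matrix.diagonal_mul]
      simp only [J5, Matrix.of_apply]
      split_ifs <;> simp
    · refine conj_of_comm (hDunit.map (ee F n)) ?_
      rw [← eeK X Y, ← eeK X' Y', ← map_mul, ← map_mul]
      congr 1
      have hXc : X * S = S * X' := comm_of_conj hS hX
      have hYc : Y * S = S * Y' := comm_of_conj hS hY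
      ext i j
      rw [Matrix.mul_diagonal, Matrix.diagonal_mul]
      simp only [K5, Matrix.of_apply]
      split_ifs <;> simp [hXc, hYc]
  · rintro ⟨R, hR, hJ, hK⟩
    -- pass to block form
    set R' : Matrix (Fin 5) (Fin 5) (Matrix (Fin n) (Fin n) F) := (ee F n).symm R with hR'
    have hRR' : ee F n R' = R := (ee F n).apply_symm_apply R
    have hJ5 : J5 F n * R' = R' * J5 F n := by
      apply (ee F n).injective
      rw [map_mul, map_mul, hRR', eeJ]
      exact comm_of_conj hR hJ
    have hK5 : K5 X Y * R' = R' * K5 X' Y' := by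
      apply (ee F n).injective
      rw [map_mul, map_mul, hRR', eeK, eeK]
      exact comm_of_conj hR hK
    -- extract block-entry equations from the `J` relation
    have hJe : ∀ i j, (J5 F n * R') i j = (R' * J5 F n) i j := fun i j => by rw [hJ5]
    have h30 : R' 3 0 = 0 := by
      have h := hJe 3 1; simp [J5, Matrix.mul_apply, Fin.sum_univ_five] at h; exact h.symm
    have h31 : R' 3 1 = 0 := by
      have h := hJe 3 2; simp [J5, Matrix.mul_apply, Fin.sum_univ_five] at h; exact h.symm
    have h32 : R' 3 2 = 0 := by
      have h := hJe 3 3; simp [J5, Matrix.mul_apply, Fin.sum_univ_five] at h; exact h.symm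
    have h34 : R' 3 4 = 0 := by
      have h := hJe 2 4; simp [J5, Matrix.mul_apply, Fin.sum_univ_five] at h; exact h
    have h2233 : R' 3 3 = R' 2 2 := by
      have h := hJe 2 3; simp [J5, Matrix.mul_apply, Fin.sum_univ_five] at h; exact h
    have h1122 : R' 2 2 = R' 1 1 := by
      have h := hJe 1 2; simp [J5, Matrix.mul_apply, Fin.sum_univ_five] at h; exact h
    have h0011 : R' 1 1 = R' 0 0 := by
      have h := hJe 0 1; simp [J5, Matrix.mul_apply, Fin.sum_univ_five] at h; exact h
    have h41 : R' 4 1 = 0 := by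
      have h := hJe 4 2; simp [J5, Matrix.mul_apply, Fin.sum_univ_five] at h; exact h.symm
    have h14 : R' 1 4 = 0 := by
      have h := hJe 0 4; simp [J5, Matrix.mul_apply, Fin.sum_univ_five] at h; exact h
    have h24 : R' 2 4 = 0 := by
      have h := hJe 1 4; simp [J5, Matrix.mul_apply, Fin.sum_univ_five] at h; exact h
    set A : Matrix (Fin n) (Fin n) F := R' 0 0 with hA
    have h33 : R' 3 3 = A := by rw [h2233, h1122, h0011]
    -- extract block-entry equations from the `K` relation
    have hKe : ∀ i j, (K5 X Y * R') i j = (R' * K5 X' Y') i j := fun i j => by rw [hK5]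
    have h44 : R' 4 4 = A := by
      have h := hKe 4 3
      simp [K5, Matrix.mul_apply, Fin.sum_univ_five, h41, h33] at h
      exact h.symm
    have hXA : X * A = A * X' := by
      have h := hKe 1 3
      simpa [K5, Matrix.mul_apply, Fin.sum_univ_five, h33, h0011, h14] using h
    have hYA : Y * A = A * Y' := by
      have h := hKe 0 4
      simpa [K5, Matrix.mul_apply, Fin.sum_univ_five, h24, h44] using h
    -- `A` is invertible, since row block 4 of `R` is `(0,0,0,A,0)`
    have hAdet : A.det ≠ 0 := by
      intro hdet
      obtain ⟨u, hu0, hu⟩ := Matrix.exists_vecMul_eq_zero_iff.mpr hdet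
      set w : Fin 5 × Fin n → F := fun p => if p.1 = 3 then u p.2 else 0 with hw
      have hw0 : w ≠ 0 := by
        obtain ⟨j0, hj0⟩ := Function.ne_iff.mp hu0
        intro h
        exact hj0 (by simpa [hw] using congrFun h (3, j0))
      have key : ∀ (j : Fin 5) (q : Fin n), (∑ p, u p * R' 3 j p q) = 0 := by
        intro j q
        have hv : ∀ B : Matrix (Fin n) (Fin n) F, Matrix.vecMul u B = 0 →
            (∑ p, u p * B p q) = 0 := fun B hB => by
          have := congrFun hB q
          simpa [Matrix.vecMul, dotProduct] using this
        fin_cases j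
        · exact hv (R' 3 0) (by rw [h30]; simp)
        · exact hv (R' 3 1) (by rw [h31]; simp)
        · exact hv (R' 3 2) (by rw [h32]; simp)
        · exact hv (R' 3 3) (by rw [h33]; exact hu)
        · exact hv (R' 3 4) (by rw [h34]; simp)
      have hwR : Matrix.vecMul w R = 0 := by
        funext qq
        obtain ⟨j, q⟩ := qq
        have hent : ∀ (i : Fin 5) (p : Fin n), R (i, p) (j, q) = R' i j p q :=
          fun i p => by rw [← hRR']; rfl
        simp only [Matrix.vecMul, dotProduct, Pi.zero_apply, hw]
        rw [Fintype.sum_prod_type, Fin.sum_univ_five]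
        simp only [hent]
        simp [key j q]
      have : R.det = 0 := Matrix.exists_vecMul_eq_zero_iff.mp ⟨w, hw0, hwR⟩
      have := (Matrix.isUnit_iff_isUnit_det R).mp hR
      rw [‹R.det = 0›] at this
      exact (by simpa using this : False)
    have hAunit : IsUnit A := (Matrix.isUnit_iff_isUnit_det A).mpr (isUnit_iff_ne_zero.mpr hAdet)
    refine ⟨A, hAunit, ?_, ?_⟩
    · exact conj_of_comm hAunit hXA
    · exact conj_of_comm hAunit hYA
end

section
/- Let F be a field, n ≥ 1, and let R be a 5n×5n matrix over F that commutes with J. Then, partitioning R into n×n blocks R = [R_{ij}]_{i,j=1}^5, there exist n×n matrices C, C_1, C_2, C_3, D, E, F_0 such that R_{11} = R_{22} = R_{33} = R_{44} = C, R_{12} = R_{23} = R_{34} = C_1, R_{13} = R_{24} = C_2, R_{14} = C_3, R_{15} = D, R_{54} = E, R_{55} = F_0, and all remaining blocks of R are zero. -/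
/-- The `n × n` block of a matrix commuting with `J` in block position
`(i+1, j+1)` (so `(0,0)`-indexed here): `C` on the first four diagonal
positions, `C₁` on the first superdiagonal of the 4×4 Jordan-like part,
`C₂` on the second, `C₃` in position `(1,4)`, `D` in position `(1,5)`,
`E` in position `(5,4)`, `F₀` in position `(5,5)`, and `0` elsewhere. -/
def Rblk {F : Type*} [Field F] {n : ℕ}
    (C C₁ C₂ C₃ D E F₀ : Matrix (Fin n) (Fin n) F) :
    Fin 5 → Fin 5 → Matrix (Fin n) (Fin n) F := fun i j =>
  if (i = 0 ∧ j = 0) ∨ (i = 1 ∧ j = 1) ∨ (i = 2 ∧ j = 2) ∨ (i = 3 ∧ j = 3) then C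
  else if (i = 0 ∧ j = 1) ∨ (i = 1 ∧ j = 2) ∨ (i = 2 ∧ j = 3) then C₁
  else if (i = 0 ∧ j = 2) ∨ (i = 1 ∧ j = 3) then C₂
  else if i = 0 ∧ j = 3 then C₃
  else if i = 0 ∧ j = 4 then D
  else if i = 4 ∧ j = 3 then E
  else if i = 4 ∧ j = 4 then F₀
  else 0

lemma mulJ_apply (F : Type*) [Field F] (n : ℕ)
    (R : Matrix (Fin 5 × Fin n) (Fin 5 × Fin n) F) (i j : Fin 5) (k l : Fin n) :
    (R * Jmat F n) (i,k) (j,l) =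
      if j = 1 then R (i,k) (0,l) else if j = 2 then R (i,k) (1,l)
      else if j = 3 then R (i,k) (2,l) else 0 := by
  simp [Matrix.mul_apply, Jmat, Fintype.sum_prod_type, Fin.sum_univ_five,
    Matrix.one_apply]
  fin_cases j <;> simp

lemma Jmul_apply (F : Type*) [Field F] (n : ℕ)
    (R : Matrix (Fin 5 × Fin n) (Fin 5 × Fin n) F) (i j : Fin 5) (k l : Fin n) :
    (Jmat F n * R) (i,k) (j,l) =
      if i = 0 then R (1,k) (j,l) else if i = 1 then R (2,k) (j,l)
      else if i = 2 then R (3,k) (j,l) else 0 := by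
  simp [Matrix.mul_apply, Jmat, Fintype.sum_prod_type, Fin.sum_univ_five,
    Matrix.one_apply]
  fin_cases i <;> simp

/-- Any `5n × 5n` matrix `R` commuting with `J` has the block form
`[[C,C₁,C₂,C₃,D],[0,C,C₁,C₂,0],[0,0,C,C₁,0],[0,0,0,C,0],[0,0,0,E,F₀]]`. -/
theorem commutes_with_Jmat_block_form (F : Type*) [Field F] (n : ℕ) (hn : 1 ≤ n)
    (R : Matrix (Fin 5 × Fin n) (Fin 5 × Fin n) F)
    (hR : R * Jmat F n = Jmat F n * R) :
    ∃ C C₁ C₂ C₃ D E F₀ : Matrix (Fin n) (Fin n) F,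
      ∀ (i j : Fin 5) (k l : Fin n),
        R (i, k) (j, l) = Rblk C C₁ C₂ C₃ D E F₀ i j k l := by

  have key : ∀ (i j : Fin 5) (k l : Fin n),
      (if j = 1 then R (i,k) (0,l) else if j = 2 then R (i,k) (1,l)
        else if j = 3 then R (i,k) (2,l) else 0) =
      (if i = 0 then R (1,k) (j,l) else if i = 1 then R (2,k) (j,l)
        else if i = 2 then R (3,k) (j,l) else 0) := by
    intro i j k l
    rw [← mulJ_apply, ← Jmul_apply, hR]
  have h10 : ∀ k l, R (1,k) (0,l) = 0 := fun k l => by simpa using (key 0 0 k l).symm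
  have h20 : ∀ k l, R (2,k) (0,l) = 0 := fun k l => by simpa using (key 1 0 k l).symm
  have h30 : ∀ k l, R (3,k) (0,l) = 0 := fun k l => by simpa using (key 2 0 k l).symm
  have h40 : ∀ k l, R (4,k) (0,l) = 0 := fun k l => by simpa using key 4 1 k l
  have h21 : ∀ k l, R (2,k) (1,l) = 0 := fun k l => by
    have := key 1 1 k l; simp [h10] at this; exact this.symm
  have h31 : ∀ k l, R (3,k) (1,l) = 0 := fun k l => by
    have := key 2 1 k l; simp [h20] at this; exact this.symm
  have h41 : ∀ k l, R (4,k) (1,l) = 0 := fun k l => by simpa using key 4 2 k l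
  have h32 : ∀ k l, R (3,k) (2,l) = 0 := fun k l => by
    have := key 2 2 k l; simp [h21] at this; exact this.symm
  have h42 : ∀ k l, R (4,k) (2,l) = 0 := fun k l => by simpa using key 4 3 k l
  have h14 : ∀ k l, R (1,k) (4,l) = 0 := fun k l => by simpa using (key 0 4 k l).symm
  have h24 : ∀ k l, R (2,k) (4,l) = 0 := fun k l => by simpa using (key 1 4 k l).symm
  have h34 : ∀ k l, R (3,k) (4,l) = 0 := fun k l => by simpa using (key 2 4 k l).symm
  have hC1 : ∀ k l, R (1,k) (1,l) = R (0,k) (0,l) := fun k l => by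
    simpa using (key 0 1 k l).symm
  have hC2 : ∀ k l, R (2,k) (2,l) = R (0,k) (0,l) := fun k l => by
    have := key 1 2 k l; simp [hC1] at this; exact this.symm
  have hC3 : ∀ k l, R (3,k) (3,l) = R (0,k) (0,l) := fun k l => by
    have := key 2 3 k l; simp [hC2] at this; exact this.symm
  have hD1 : ∀ k l, R (1,k) (2,l) = R (0,k) (1,l) := fun k l => by
    simpa using (key 0 2 k l).symm
  have hD2 : ∀ k l, R (2,k) (3,l) = R (0,k) (1,l) := fun k l => by
    have := key 1 3 k l; simp [hD1] at this; exact this.symm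
  have hE1 : ∀ k l, R (1,k) (3,l) = R (0,k) (2,l) := fun k l => by
    simpa using (key 0 3 k l).symm
  refine ⟨Matrix.of fun k l => R (0,k) (0,l), Matrix.of fun k l => R (0,k) (1,l),
    Matrix.of fun k l => R (0,k) (2,l), Matrix.of fun k l => R (0,k) (3,l),
    Matrix.of fun k l => R (0,k) (4,l), Matrix.of fun k l => R (4,k) (3,l),
    Matrix.of fun k l => R (4,k) (4,l), ?_⟩
  intro i j k l
  fin_cases i <;> fin_cases j <;>
    simp [Rblk, h10, h20, h30, h40, h21, h31, h41, h32, h42, h14, h24, h34,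
      hC1, hC2, hC3, hD1, hD2, hE1]
end

section
/- Let F be a field, λ ∈ F with λ ≠ 0, m ≥ 1, let A, B be m×m matrices over F, and let α, β ∈ F with β ≠ 0. Then rank(αM_1(A) + βM_2(B)) ≥ 4m+4. -/
open Matrix

lemma rank_submatrix_le' {F : Type*} [Field F] {N ι : Type*} [Fintype N] [Fintype ι]
    [DecidableEq N] (M : Matrix N N F) (f g : ι → N) :
    (M.submatrix f g).rank ≤ M.rank := by
  have h : M.submatrix f g =
      ((1 : Matrix N N F).submatrix f (Equiv.refl N)) *
        (M * ((1 : Matrix N N F).submatrix (Equiv.refl N) g)) := by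
    rw [mul_submatrix_one (Equiv.refl N) g M, one_submatrix_mul f (Equiv.refl N)]
    simp [Matrix.submatrix_submatrix]
  calc (M.submatrix f g).rank
      ≤ (M * ((1 : Matrix N N F).submatrix (Equiv.refl N) g)).rank := by
        rw [h]; exact Matrix.rank_mul_le_right _ _
    _ ≤ M.rank := Matrix.rank_mul_le_left _ _

lemma rank_diagonal_eq_card {F : Type*} [Field F] {ι : Type*} [Fintype ι] [DecidableEq ι]
    (w : ι → F) (hw : ∀ i, w i ≠ 0) :
    (Matrix.diagonal w).rank = Fintype.card ι := by
  classical
  rw [Matrix.rank_diagonal]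
  exact Fintype.card_congr (Equiv.subtypeUnivEquiv hw)

/-- Index type for the block-diagonal `(7m+6) × (7m+6)` matrices
`M₁(A) = I_{2m+2} ⊕ 0_{3m+3} ⊕ I_{m+1} ⊕ A` and
`M₂(B) = 0_{2m+2} ⊕ I_{3m+3} ⊕ λI_{m+1} ⊕ B`. -/
abbrev MIdx (m : ℕ) : Type := Fin (2*m+2) ⊕ (Fin (3*m+3) ⊕ (Fin (m+1) ⊕ Fin m))

/-- `M₁(A) := I_{2m+2} ⊕ 0_{3m+3} ⊕ I_{m+1} ⊕ A`, a `(7m+6) × (7m+6)` matrix. -/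
def M1 {F : Type*} [Field F] {m : ℕ} (A : Matrix (Fin m) (Fin m) F) :
    Matrix (MIdx m) (MIdx m) F :=
  Matrix.fromBlocks 1 0 0
    (Matrix.fromBlocks 0 0 0
      (Matrix.fromBlocks 1 0 0 A))

/-- `M₂(B) := 0_{2m+2} ⊕ I_{3m+3} ⊕ λI_{m+1} ⊕ B`, a `(7m+6) × (7m+6)` matrix. -/
def M2 {F : Type*} [Field F] {m : ℕ} (l : F) (B : Matrix (Fin m) (Fin m) F) :
    Matrix (MIdx m) (MIdx m) F :=
  Matrix.fromBlocks 0 0 0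
    (Matrix.fromBlocks 1 0 0
      (Matrix.fromBlocks (l • (1 : Matrix (Fin (m+1)) (Fin (m+1)) F)) 0 0 B))

/-- For any field `F`, nonzero `λ ∈ F`, `m ≥ 1`, `m × m` matrices `A, B`,
and `α, β ∈ F` with `β ≠ 0`, the rank of `αM₁(A) + βM₂(B)` is at least `4m+4`. -/
theorem rank_smul_M1_add_smul_M2_ge (F : Type*) [Field F] (l : F) (hl : l ≠ 0)
    (m : ℕ) (hm : 1 ≤ m) (A B : Matrix (Fin m) (Fin m) F)
    (α β : F) (hβ : β ≠ 0) :
    4*m+4 ≤ (α • M1 A + β • M2 l B).rank := by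
  classical
  set X := α • M1 A + β • M2 l B with hX
  by_cases hα : α = 0
  · -- use blocks 2 and 3
    set f : Fin (3*m+3) ⊕ Fin (m+1) → MIdx m :=
      Sum.elim (fun i => Sum.inr (Sum.inl i)) (fun i => Sum.inr (Sum.inr (Sum.inl i))) with hf
    have hsub : X.submatrix f f =
        Matrix.diagonal (Sum.elim (fun _ => β) (fun _ => β * l)) := by
      ext i j
      rcases i with i | i <;> rcases j with j | j <;>
        simp [hX, hf, M1, M2, hα, Matrix.diagonal_apply, Matrix.one_apply, Sum.inl.injEq,
          Sum.inr.injEq, mul_comm]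
    have h1 : (X.submatrix f f).rank = 4*m+4 := by
      rw [hsub, rank_diagonal_eq_card]
      · simp; ring
      · rintro (i | i) <;> simp [hβ, hl]
    calc 4*m+4 = (X.submatrix f f).rank := h1.symm
      _ ≤ X.rank := rank_submatrix_le' _ _ _
  · -- use blocks 1 and 2
    set f : Fin (2*m+2) ⊕ Fin (3*m+3) → MIdx m :=
      Sum.elim Sum.inl (fun i => Sum.inr (Sum.inl i)) with hf
    have hsub : X.submatrix f f =
        Matrix.diagonal (Sum.elim (fun _ => α) (fun _ => β)) := by
      ext i j
      rcases i with i | i <;> rcases j with j | j <;>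
        simp [hX, hf, M1, M2, Matrix.diagonal_apply, Matrix.one_apply, Sum.inl.injEq,
          Sum.inr.injEq]
    have h1 : (X.submatrix f f).rank = 5*m+5 := by
      rw [hsub, rank_diagonal_eq_card]
      · simp; ring
      · rintro (i | i) <;> simp [hα, hβ]
    have := rank_submatrix_le' X f f
    omega
end

section
/- Let F be a field, λ ∈ F with λ ≠ 0, m ≥ 1, and let (A,B) and (A',B') be pairs of m×m matrices over F. Then (A,B) and (A',B') are similar (i.e., there is a nonsingular m×m matrix S with S^{-1}AS = A' and S^{-1}BS = B') if and only if the pairs of (7m+6)×(7m+6) matrices (M_1(A), M_2(B)) and (M_1(A'), M_2(B')) are weakly similar. -/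
/-- Two pairs `(A, B)` and `(A', B')` of square matrices of the same size are
*weakly similar* if there are a nonsingular matrix `S` and a nonsingular
`2 × 2` matrix `[[α, β], [γ, δ]]` with `S⁻¹(αA + βB)S = A'` and
`S⁻¹(γA + δB)S = B'`. -/
def WeaklySimilar {F : Type*} [Field F] {N : Type*} [Fintype N] [DecidableEq N]
    (A B A' B' : Matrix N N F) : Prop :=
  ∃ (S : Matrix N N F) (α β γ δ : F),
    IsUnit S ∧ IsUnit !![α, β; γ, δ] ∧
    S⁻¹ * (α • A + β • B) * S = A' ∧ S⁻¹ * (γ • A + δ • B) * S = B'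


/- ### Auxiliary machinery for the proof -/

namespace MWS
open Matrix

variable {F : Type*} [Field F]

/-- kernel dimension of a square matrix -/
noncomputable def nu {F : Type*} [Field F] {n : Type*} [Fintype n] (X : Matrix n n F) : ℕ :=
  Module.finrank F (LinearMap.ker X.mulVecLin)

def prodLEquiv {R M N : Type*} [Semiring R] [AddCommMonoid M] [AddCommMonoid N]
    [Module R M] [Module R N] (p : Submodule R M) (q : Submodule R N) :
    (p.prod q) ≃ₗ[R] p × q where
  toFun x := (⟨x.1.1, x.2.1⟩, ⟨x.1.2, x.2.2⟩)
  invFun x := ⟨(x.1.1, x.2.1), ⟨x.1.2, x.2.2⟩⟩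
  map_add' _ _ := rfl
  map_smul' _ _ := rfl
  left_inv _ := rfl
  right_inv _ := rfl

lemma nu_add_rank {n : Type*} [Fintype n] (X : Matrix n n F) :
    X.rank + nu X = Fintype.card n := by
  rw [Matrix.rank, nu, LinearMap.finrank_range_add_finrank_ker, Module.finrank_pi]

lemma nu_le {n : Type*} [Fintype n] (X : Matrix n n F) : nu X ≤ Fintype.card n := by
  have := nu_add_rank X; omega

lemma nu_conj {n : Type*} [Fintype n] [DecidableEq n] (S X : Matrix n n F) (hS : IsUnit S) :
    nu (S⁻¹ * X * S) = nu X := by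
  have hd : IsUnit S.det := (Matrix.isUnit_iff_isUnit_det S).mp hS
  have hd' : IsUnit S⁻¹.det := S.isUnit_nonsing_inv_det hd
  have hr : (S⁻¹ * X * S).rank = X.rank := by
    rw [Matrix.rank_mul_eq_left_of_isUnit_det S _ hd,
      Matrix.rank_mul_eq_right_of_isUnit_det S⁻¹ X hd']
  have h1 := nu_add_rank (S⁻¹ * X * S)
  have h2 := nu_add_rank X
  omega

lemma nu_zero {n : Type*} [Fintype n] : nu (0 : Matrix n n F) = Fintype.card n := by
  rw [nu, Matrix.mulVecLin_zero, LinearMap.ker_zero, finrank_top, Module.finrank_pi]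

lemma nu_smul_one_ne {n : Type*} [Fintype n] [DecidableEq n] {c : F} (hc : c ≠ 0) :
    nu (c • (1 : Matrix n n F)) = 0 := by
  have hu : IsUnit (c • (1 : Matrix n n F)) := by
    rw [Matrix.isUnit_iff_isUnit_det, Matrix.det_smul, Matrix.det_one, mul_one]
    exact (isUnit_iff_ne_zero.mpr hc).pow _
  have h1 := nu_add_rank (c • (1 : Matrix n n F))
  rw [Matrix.rank_of_isUnit _ hu] at h1
  omega

lemma nu_fromBlocks {n o : Type*} [Fintype n] [Fintype o]
    (X : Matrix n n F) (Y : Matrix o o F) :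
    nu (Matrix.fromBlocks X 0 0 Y) = nu X + nu Y := by
  set e := LinearEquiv.sumArrowLequivProdArrow n o F F with he
  have hmap : (LinearMap.ker (Matrix.fromBlocks X 0 0 Y).mulVecLin).map
        (e : ((n ⊕ o) → F) →ₗ[F] (n → F) × (o → F))
      = (LinearMap.ker X.mulVecLin).prod (LinearMap.ker Y.mulVecLin) := by
    ext z
    constructor
    · rintro ⟨w, hw, rfl⟩
      simp only [SetLike.mem_coe, LinearMap.mem_ker, Matrix.mulVecLin_apply,
        Matrix.fromBlocks_mulVec] at hw
      refine Submodule.mem_prod.mpr ⟨?_, ?_⟩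
      · rw [LinearMap.mem_ker, Matrix.mulVecLin_apply]
        funext i
        have := congrFun hw (Sum.inl i)
        simp [e] at this; exact this
      · rw [LinearMap.mem_ker, Matrix.mulVecLin_apply]
        funext i
        have := congrFun hw (Sum.inr i)
        simp [e] at this; exact this
    · rintro ⟨h1, h2⟩
      refine ⟨Sum.elim z.1 z.2, ?_, ?_⟩
      · simp only [SetLike.mem_coe, LinearMap.mem_ker, Matrix.mulVecLin_apply,
          Matrix.fromBlocks_mulVec]
        have h1' : X *ᵥ z.1 = 0 := h1
        have h2' : Y *ᵥ z.2 = 0 := h2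
        funext i
        rcases i with i | i <;> simp [Function.comp_def, h1', h2']
      · ext i <;> simp [e]
  have e2 := LinearEquiv.ofSubmodules e _ _ hmap
  rw [nu, nu, nu, e2.finrank_eq, (prodLEquiv _ _).finrank_eq, Module.finrank_prod]

/-- the common nested-block shape on `MIdx m` -/
def blk {F : Type*} [Field F] {m : ℕ} (a b c : F) (D : Matrix (Fin m) (Fin m) F) :
    Matrix (MIdx m) (MIdx m) F :=
  Matrix.fromBlocks (a • 1) 0 0 (Matrix.fromBlocks (b • 1) 0 0 (Matrix.fromBlocks (c • 1) 0 0 D))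

lemma one_blk {m : ℕ} : (1 : Matrix (MIdx m) (MIdx m) F) =
    Matrix.fromBlocks 1 0 0 (Matrix.fromBlocks 1 0 0 (Matrix.fromBlocks 1 0 0 1)) := by
  rw [Matrix.fromBlocks_one, Matrix.fromBlocks_one, Matrix.fromBlocks_one]

lemma combo_blk {m : ℕ} (x y l t : F) (A B : Matrix (Fin m) (Fin m) F) :
    x • M1 A + y • M2 l B - t • (1 : Matrix (MIdx m) (MIdx m) F)
      = blk (x - t) (y - t) (x + y * l - t) (x • A + y • B - t • 1) := by
  unfold M1 M2 blk
  rw [one_blk]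
  simp only [Matrix.fromBlocks_smul, Matrix.fromBlocks_add, sub_eq_add_neg,
    Matrix.fromBlocks_neg, Matrix.fromBlocks_add, smul_zero, add_zero, zero_add, neg_zero,
    smul_smul]
  rw [Matrix.fromBlocks_inj]
  refine ⟨by module, by simp, by simp, ?_⟩
  rw [Matrix.fromBlocks_inj]
  refine ⟨by module, by simp, by simp, ?_⟩
  rw [Matrix.fromBlocks_inj]
  exact ⟨by module, by simp, by simp, by module⟩

open scoped Classical in
lemma nu_blk {m : ℕ} (a b c : F) (D : Matrix (Fin m) (Fin m) F) :
    nu (blk a b c D) = (if a = 0 then 2*m+2 else 0) + ((if b = 0 then 3*m+3 else 0)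
      + ((if c = 0 then m+1 else 0) + nu D)) := by
  unfold blk
  rw [nu_fromBlocks, nu_fromBlocks, nu_fromBlocks]
  congr 1
  · by_cases h : a = 0
    · subst h; rw [zero_smul, if_pos rfl, nu_zero]; simp
    · rw [if_neg h, nu_smul_one_ne h]
  congr 1
  · by_cases h : b = 0
    · subst h; rw [zero_smul, if_pos rfl, nu_zero]; simp
    · rw [if_neg h, nu_smul_one_ne h]
  congr 1
  · by_cases h : c = 0
    · subst h; rw [zero_smul, if_pos rfl, nu_zero]; simp
    · rw [if_neg h, nu_smul_one_ne h]

lemma nu_sub_conj {n : Type*} [Fintype n] [DecidableEq n] {S X X' : Matrix n n F}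
    (hS : IsUnit S) (h : S⁻¹ * X * S = X') (t : F) :
    nu (X - t • 1) = nu (X' - t • 1) := by
  have hd : IsUnit S.det := (Matrix.isUnit_iff_isUnit_det S).mp hS
  have key : S⁻¹ * (X - t • 1) * S = X' - t • 1 := by
    rw [Matrix.mul_sub, Matrix.sub_mul, h]
    congr 1
    rw [Matrix.mul_smul, Matrix.smul_mul, Matrix.mul_one, Matrix.nonsing_inv_mul _ hd]
  rw [← key, nu_conj _ _ hS]

lemma scalars {m : ℕ} (l : F) (hl : l ≠ 0) (α β γ δ : F)
    (hdet : IsUnit !![α, β; γ, δ])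
    (A B A' B' : Matrix (Fin m) (Fin m) F) (S : Matrix (MIdx m) (MIdx m) F) (hS : IsUnit S)
    (h1 : S⁻¹ * (α • M1 A + β • M2 l B) * S = M1 A')
    (h2 : S⁻¹ * (γ • M1 A + δ • M2 l B) * S = M2 l B') :
    α = 1 ∧ β = 0 ∧ γ = 0 ∧ δ = 1 := by
  classical
  have hd : α * δ - β * γ ≠ 0 := by
    have := (Matrix.isUnit_iff_isUnit_det _).mp hdet
    rw [Matrix.det_fin_two_of] at this
    exact isUnit_iff_ne_zero.mp this
  have nn : ∀ (D : Matrix (Fin m) (Fin m) F), nu D ≤ m := fun D => by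
    simpa using nu_le D
  have E1 : ∀ t : F, nu (blk (α-t) (β-t) (α+β*l-t) (α•A+β•B - t•(1 : Matrix (Fin m) (Fin m) F)))
      = nu (blk (1-t) (0-t) (1-t) (A' - t•(1 : Matrix (Fin m) (Fin m) F))) := by
    intro t
    have h := nu_sub_conj hS h1 t
    rw [combo_blk] at h
    have h' : M1 A' - t • (1 : Matrix (MIdx m) (MIdx m) F)
        = blk (1-t) (0-t) (1-t) (A' - t•1) := by
      have := combo_blk 1 0 l t A' B'
      simpa using this
    rw [h'] at h
    exact h
  have E2 : ∀ t : F, nu (blk (γ-t) (δ-t) (γ+δ*l-t) (γ•A+δ•B - t•(1 : Matrix (Fin m) (Fin m) F)))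
      = nu (blk (0-t) (1-t) (l-t) (B' - t•(1 : Matrix (Fin m) (Fin m) F))) := by
    intro t
    have h := nu_sub_conj hS h2 t
    rw [combo_blk] at h
    have h' : M2 l B' - t • (1 : Matrix (MIdx m) (MIdx m) F)
        = blk (0-t) (1-t) (l-t) (B' - t•1) := by
      have := combo_blk 0 1 l t A' B'
      simpa using this
    rw [h'] at h
    exact h
  -- step: α ∈ {0, 1}
  have hα01 : α = 0 ∨ α = 1 := by
    by_contra hc
    push_neg at hc
    obtain ⟨h0, h1'⟩ := hc
    have e := E1 α
    rw [nu_blk, nu_blk] at e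
    have b1 := nn (A' - α • (1:Matrix (Fin m) (Fin m) F))
    have b2 := nn (α•A+β•B - α • (1:Matrix (Fin m) (Fin m) F))
    simp only [if_pos (sub_self α),
      if_neg (sub_ne_zero_of_ne (Ne.symm h1')),
      if_neg (sub_ne_zero_of_ne (Ne.symm h0)),
      if_neg (sub_ne_zero_of_ne (Ne.symm h1'))] at e
    split_ifs at e <;> omega
  -- step: β = 0
  have hβ : β = 0 := by
    by_contra hβ0
    have hβ1 : β = 1 := by
      by_contra hβ1
      have e := E1 β
      rw [nu_blk, nu_blk] at e
      have b1 := nn (A' - β • (1:Matrix (Fin m) (Fin m) F))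
      have b2 := nn (α•A+β•B - β • (1:Matrix (Fin m) (Fin m) F))
      simp only [if_pos (sub_self β),
        if_neg (sub_ne_zero_of_ne (Ne.symm hβ1)),
        if_neg (sub_ne_zero_of_ne (Ne.symm hβ0)),
        if_neg (sub_ne_zero_of_ne (Ne.symm hβ1))] at e
      split_ifs at e <;> omega
    subst hβ1
    rcases hα01 with hα | hα
    · subst hα
      by_cases hl1 : l = 1
      · subst hl1
        have e := E1 1
        rw [nu_blk, nu_blk] at e
        have b1 := nn (A' - (1:F) • (1:Matrix (Fin m) (Fin m) F))
        have b2 := nn ((0:F)•A+(1:F)•B - (1:F) • (1:Matrix (Fin m) (Fin m) F))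
        have p : (1:F) - 1 = 0 := sub_self 1
        have q : ¬((0:F) - 1 = 0) := by intro h; norm_num at h
        simp only [if_neg q, if_pos p, if_pos (show (0:F) + 1*1 - 1 = 0 by ring),
          if_pos p, if_neg q, if_pos p] at e
        omega
      · have e := E1 l
        rw [nu_blk, nu_blk] at e
        have b1 := nn (A' - l • (1:Matrix (Fin m) (Fin m) F))
        have b2 := nn ((0:F)•A+(1:F)•B - l • (1:Matrix (Fin m) (Fin m) F))
        have p : ¬((1:F) - l = 0) := by
          intro h; exact hl1 (by linear_combination -h)
        have q : ¬((0:F) - l = 0) := by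
          intro h; exact hl (by linear_combination -h)
        simp only [if_neg q, if_neg p, if_pos (show (0:F) + 1*l - l = 0 by ring),
          if_neg p, if_neg q, if_neg p] at e
        omega
    · subst hα
      have e := E1 1
      rw [nu_blk, nu_blk] at e
      have b1 := nn (A' - (1:F) • (1:Matrix (Fin m) (Fin m) F))
      have b2 := nn ((1:F)•A+(1:F)•B - (1:F) • (1:Matrix (Fin m) (Fin m) F))
      have p : (1:F) - 1 = 0 := sub_self 1
      have q : ¬((0:F) - 1 = 0) := by intro h; norm_num at h
      have r : ¬((1:F) + 1*l - 1 = 0) := by intro h; exact hl (by linear_combination h)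
      simp only [if_pos p, if_pos p, if_neg r, if_pos p, if_neg q, if_pos p] at e
      omega
  subst hβ
  have hα : α = 1 := by
    rcases hα01 with h | h
    · exfalso; apply hd; rw [h]; ring
    · exact h
  subst hα
  -- step: δ = 1
  have hδ : δ = 1 := by
    by_contra hδ1
    have e := E2 δ
    rw [nu_blk, nu_blk] at e
    have b1 := nn (B' - δ • (1:Matrix (Fin m) (Fin m) F))
    have b2 := nn (γ•A+δ•B - δ • (1:Matrix (Fin m) (Fin m) F))
    have p : ¬((1:F) - δ = 0) := sub_ne_zero_of_ne (Ne.symm hδ1)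
    simp only [if_pos (sub_self δ), if_neg p] at e
    by_cases w3 : (0:F) - δ = 0
    · have w4 : ¬(l - δ = 0) := by
        intro h; exact hl (by linear_combination h - w3)
      simp only [if_pos w3, if_neg w4] at e
      split_ifs at e <;> omega
    · simp only [if_neg w3] at e
      split_ifs at e <;> omega
  subst hδ
  -- step: γ = 0
  have hγ : γ = 0 := by
    by_contra hγ0
    by_cases hγ1 : γ = 1
    · subst hγ1
      have e := E2 1
      rw [nu_blk, nu_blk] at e
      have b1 := nn (B' - (1:F) • (1:Matrix (Fin m) (Fin m) F))
      have b2 := nn ((1:F)•A+(1:F)•B - (1:F) • (1:Matrix (Fin m) (Fin m) F))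
      have p : (1:F) - 1 = 0 := sub_self 1
      have q : ¬((0:F) - 1 = 0) := by intro h; norm_num at h
      have r : ¬((1:F) + 1*l - 1 = 0) := by intro h; exact hl (by linear_combination h)
      simp only [if_pos p, if_pos p, if_neg r, if_neg q, if_pos p] at e
      split_ifs at e <;> omega
    · have e := E2 γ
      rw [nu_blk, nu_blk] at e
      have b1 := nn (B' - γ • (1:Matrix (Fin m) (Fin m) F))
      have b2 := nn (γ•A+(1:F)•B - γ • (1:Matrix (Fin m) (Fin m) F))
      have p : ¬((1:F) - γ = 0) := sub_ne_zero_of_ne (Ne.symm hγ1)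
      have q : ¬((0:F) - γ = 0) := sub_ne_zero_of_ne (Ne.symm hγ0)
      have r : ¬(γ + 1*l - γ = 0) := by intro h; exact hl (by linear_combination h)
      simp only [if_pos (sub_self γ), if_neg p, if_neg r, if_neg q, if_neg p] at e
      split_ifs at e <;> omega
  exact ⟨rfl, rfl, hγ, rfl⟩

-- intertwining transfers to the inverse
lemma inv_intertwine {n : Type*} [Fintype n] [DecidableEq n]
    {S X X' : Matrix n n F} (hS : IsUnit S) (h : X * S = S * X') :
    S⁻¹ * X = X' * S⁻¹ := by
  have hd : IsUnit S.det := (Matrix.isUnit_iff_isUnit_det S).mp hS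
  have h1 : S⁻¹ * (X * S) * S⁻¹ = S⁻¹ * (S * X') * S⁻¹ := by rw [h]
  calc S⁻¹ * X = S⁻¹ * (X * S) * S⁻¹ := by
        rw [Matrix.mul_assoc, Matrix.mul_assoc, Matrix.mul_nonsing_inv _ hd, Matrix.mul_one]
    _ = S⁻¹ * (S * X') * S⁻¹ := h1
    _ = X' * S⁻¹ := by
        rw [← Matrix.mul_assoc, Matrix.nonsing_inv_mul _ hd, Matrix.one_mul]

section cancel
variable {n : Type*} [Fintype n] [DecidableEq n] (p q : F) (A B A' B' : Matrix n n F)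

lemma cancel_unit_corner (S : Matrix (Unit ⊕ n) (Unit ⊕ n) F) (hS : IsUnit S)
    (hA : Matrix.fromBlocks (p • 1) 0 0 A * S = S * Matrix.fromBlocks (p • 1) 0 0 A')
    (hB : Matrix.fromBlocks (q • 1) 0 0 B * S = S * Matrix.fromBlocks (q • 1) 0 0 B')
    (hc : S.toBlocks₁₁ ≠ 0) :
    ∃ S₀ : Matrix n n F, IsUnit S₀ ∧ A * S₀ = S₀ * A' ∧ B * S₀ = S₀ * B' := by
  classical
  have hd : IsUnit S.det := (Matrix.isUnit_iff_isUnit_det S).mp hS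
  set T := S⁻¹ with hT
  have hTS : T * S = 1 := Matrix.nonsing_inv_mul _ hd
  have hST : S * T = 1 := Matrix.mul_nonsing_inv _ hd
  have hTA : T * Matrix.fromBlocks (p • 1) 0 0 A = Matrix.fromBlocks (p • 1) 0 0 A' * T :=
    inv_intertwine hS hA
  have hTB : T * Matrix.fromBlocks (q • 1) 0 0 B = Matrix.fromBlocks (q • 1) 0 0 B' * T :=
    inv_intertwine hS hB
  set c := S.toBlocks₁₁ with hcdef
  set u := S.toBlocks₁₂
  set v := S.toBlocks₂₁
  set f := S.toBlocks₂₂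
  set c' := T.toBlocks₁₁
  set u' := T.toBlocks₁₂
  set v' := T.toBlocks₂₁
  set g := T.toBlocks₂₂
  have hSb : S = Matrix.fromBlocks c u v f := (Matrix.fromBlocks_toBlocks S).symm
  have hTb : T = Matrix.fromBlocks c' u' v' g := (Matrix.fromBlocks_toBlocks T).symm
  -- block equations from hA
  rw [hSb, Matrix.fromBlocks_multiply, Matrix.fromBlocks_multiply, Matrix.fromBlocks_inj] at hA hB
  rw [hTb, Matrix.fromBlocks_multiply, Matrix.fromBlocks_multiply, Matrix.fromBlocks_inj] at hTA hTB
  rw [hSb, hTb, Matrix.fromBlocks_multiply,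
    show (1 : Matrix (Unit ⊕ n) (Unit ⊕ n) F) = Matrix.fromBlocks 1 0 0 1 from
      Matrix.fromBlocks_one.symm, Matrix.fromBlocks_inj] at hTS hST
  obtain ⟨a1, a2, a3, a4⟩ := hA
  obtain ⟨b1, b2, b3, b4⟩ := hB
  obtain ⟨ta1, ta2, ta3, ta4⟩ := hTA
  obtain ⟨tb1, tb2, tb3, tb4⟩ := hTB
  obtain ⟨ts11, ts12, ts21, ts22⟩ := hTS
  obtain ⟨st11, st12, st21, st22⟩ := hST
  simp only [Matrix.zero_mul, Matrix.mul_zero, add_zero, zero_add, Matrix.smul_mul,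
    Matrix.mul_smul, Matrix.one_mul, Matrix.mul_one] at a1 a2 a3 a4 b1 b2 b3 b4 ta1 ta2 ta3 ta4 tb1 tb2 tb3 tb4 ts11 ts12 ts21 ts22 st11 st12 st21 st22
  clear a1 b1 ta1 tb1 ts12 st21 st11 ts11
  -- the corner entry
  set c0 := c PUnit.unit PUnit.unit with hc0def
  have hc0 : c0 ≠ 0 := by
    intro h
    apply hc
    ext i j
    cases i; cases j
    simp only [Matrix.zero_apply, ← hc0def]
    exact h
  have hc1 : c = c0 • (1 : Matrix Unit Unit F) := by
    ext i j
    cases i; cases j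
    simp [Matrix.one_apply, ← hc0def]
  refine ⟨f - c0⁻¹ • (v * u), ?_, ?_, ?_⟩
  · -- IsUnit via explicit inverse g
    have hug : u * g = -(c0 • u') := by
      apply eq_neg_of_add_eq_zero_right
      rw [← st12, hc1, Matrix.smul_mul, Matrix.one_mul]
    have hgv : g * v = -(c0 • v') := by
      apply eq_neg_of_add_eq_zero_right
      rw [← ts21, hc1, Matrix.mul_smul, Matrix.mul_one]
    have h1 : (f - c0⁻¹ • (v * u)) * g = 1 := by
      rw [Matrix.sub_mul, Matrix.smul_mul, Matrix.mul_assoc, hug, Matrix.mul_neg,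
        Matrix.mul_smul, smul_neg, smul_smul, inv_mul_cancel₀ hc0, one_smul,
        sub_neg_eq_add, add_comm, st22]
    have h2 : g * (f - c0⁻¹ • (v * u)) = 1 := by
      rw [Matrix.mul_sub, Matrix.mul_smul, ← Matrix.mul_assoc, hgv, Matrix.neg_mul,
        Matrix.smul_mul, smul_neg, smul_smul, inv_mul_cancel₀ hc0, one_smul,
        sub_neg_eq_add, add_comm, ts22]
    exact ⟨⟨_, g, h1, h2⟩, rfl⟩
  · have key : A * (v * u) = v * u * A' := by
      rw [← Matrix.mul_assoc, a3, Matrix.smul_mul, Matrix.mul_assoc, ← a2, Matrix.mul_smul]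
    rw [Matrix.mul_sub, Matrix.sub_mul, a4, Matrix.mul_smul, Matrix.smul_mul, key]
  · have key : B * (v * u) = v * u * B' := by
      rw [← Matrix.mul_assoc, b3, Matrix.smul_mul, Matrix.mul_assoc, ← b2, Matrix.mul_smul]
    rw [Matrix.mul_sub, Matrix.sub_mul, b4, Matrix.mul_smul, Matrix.smul_mul, key]

lemma cancel_unit (S : Matrix (Unit ⊕ n) (Unit ⊕ n) F) (hS : IsUnit S)
    (hA : Matrix.fromBlocks (p • 1) 0 0 A * S = S * Matrix.fromBlocks (p • 1) 0 0 A')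
    (hB : Matrix.fromBlocks (q • 1) 0 0 B * S = S * Matrix.fromBlocks (q • 1) 0 0 B')
    : ∃ S₀ : Matrix n n F, IsUnit S₀ ∧ A * S₀ = S₀ * A' ∧ B * S₀ = S₀ * B' := by
  classical
  by_cases hc : S.toBlocks₁₁ ≠ 0
  · exact cancel_unit_corner p q A B A' B' S hS hA hB hc
  · push_neg at hc
    have hd : IsUnit S.det := (Matrix.isUnit_iff_isUnit_det S).mp hS
    set T := S⁻¹ with hT
    have hTS : T * S = 1 := Matrix.nonsing_inv_mul _ hd
    have hTA : T * Matrix.fromBlocks (p • 1) 0 0 A = Matrix.fromBlocks (p • 1) 0 0 A' * T :=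
      inv_intertwine hS hA
    have hTB : T * Matrix.fromBlocks (q • 1) 0 0 B = Matrix.fromBlocks (q • 1) 0 0 B' * T :=
      inv_intertwine hS hB
    set u' := T.toBlocks₁₂ with hu'
    -- relations for u'
    have hTb : T = Matrix.fromBlocks T.toBlocks₁₁ u' T.toBlocks₂₁ T.toBlocks₂₂ :=
      (Matrix.fromBlocks_toBlocks T).symm
    rw [hTb, Matrix.fromBlocks_multiply, Matrix.fromBlocks_multiply, Matrix.fromBlocks_inj]
      at hTA hTB
    obtain ⟨-, ta2, -, -⟩ := hTA
    obtain ⟨-, tb2, -, -⟩ := hTB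
    simp only [Matrix.zero_mul, Matrix.mul_zero, add_zero, zero_add, Matrix.smul_mul,
      Matrix.mul_smul, Matrix.one_mul, Matrix.mul_one] at ta2 tb2
    -- the elementary matrix E
    set E : Matrix (Unit ⊕ n) (Unit ⊕ n) F := Matrix.fromBlocks 1 u' 0 1 with hE
    have hEunit : IsUnit E := by
      refine ⟨⟨E, Matrix.fromBlocks 1 (-u') 0 1, ?_, ?_⟩, rfl⟩ <;>
        · rw [hE, Matrix.fromBlocks_multiply]
          simp [Matrix.fromBlocks_one]
    have hcommA : Matrix.fromBlocks (p • 1) 0 0 A * E = E * Matrix.fromBlocks (p • 1) 0 0 A := by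
      rw [hE, Matrix.fromBlocks_multiply, Matrix.fromBlocks_multiply]
      simp [ta2]
    have hcommB : Matrix.fromBlocks (q • 1) 0 0 B * E = E * Matrix.fromBlocks (q • 1) 0 0 B := by
      rw [hE, Matrix.fromBlocks_multiply, Matrix.fromBlocks_multiply]
      simp [tb2]
    have hA' : Matrix.fromBlocks (p • 1) 0 0 A * (E * S) = (E * S) * Matrix.fromBlocks (p • 1) 0 0 A' := by
      rw [← Matrix.mul_assoc, hcommA, Matrix.mul_assoc, hA, ← Matrix.mul_assoc]
    have hB' : Matrix.fromBlocks (q • 1) 0 0 B * (E * S) = (E * S) * Matrix.fromBlocks (q • 1) 0 0 B' := by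
      rw [← Matrix.mul_assoc, hcommB, Matrix.mul_assoc, hB, ← Matrix.mul_assoc]
    have hcorner : (E * S).toBlocks₁₁ = 1 := by
      have hSb : S = Matrix.fromBlocks S.toBlocks₁₁ S.toBlocks₁₂ S.toBlocks₂₁ S.toBlocks₂₂ :=
        (Matrix.fromBlocks_toBlocks S).symm
      have h11 : T.toBlocks₁₁ * S.toBlocks₁₁ + u' * S.toBlocks₂₁ = 1 := by
        have := hTS
        rw [hTb, hSb, Matrix.fromBlocks_multiply,
          show (1 : Matrix (Unit ⊕ n) (Unit ⊕ n) F) = Matrix.fromBlocks 1 0 0 1 from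
            Matrix.fromBlocks_one.symm, Matrix.fromBlocks_inj] at this
        exact this.1
      rw [hc, Matrix.mul_zero, zero_add] at h11
      conv_lhs => rw [hE, hSb, Matrix.fromBlocks_multiply]
      rw [Matrix.toBlocks_fromBlocks₁₁, Matrix.one_mul, h11, hc, zero_add]
    refine cancel_unit_corner p q A B A' B' (E * S) (hEunit.mul hS) hA' hB' ?_
    rw [hcorner]
    intro h
    have := congrFun (congrFun h PUnit.unit) PUnit.unit
    simp [Matrix.one_apply] at this
end cancel

lemma intertwine_reindex {n m' : Type*} [Fintype n] [Fintype m']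
    (e : n ≃ m') {X S X' : Matrix n n F} (h : X * S = S * X') :
    (Matrix.reindex e e X) * (Matrix.reindex e e S)
      = (Matrix.reindex e e S) * (Matrix.reindex e e X') := by
  rw [Matrix.reindex_apply, Matrix.reindex_apply, Matrix.reindex_apply,
    Matrix.submatrix_mul_equiv _ _ _ e.symm _, h,
    ← Matrix.submatrix_mul_equiv S _ _ e.symm _]

lemma isUnit_reindex {n m' : Type*} [Fintype n] [Fintype m'] [DecidableEq n] [DecidableEq m']
    (e : n ≃ m') {S : Matrix n n F} (hS : IsUnit S) :
    IsUnit (Matrix.reindex e e S) := by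
  rw [Matrix.isUnit_iff_isUnit_det, Matrix.reindex_apply, Matrix.det_submatrix_equiv_self]
  exact (Matrix.isUnit_iff_isUnit_det S).mp hS

def peelEquiv (k : ℕ) (n : Type*) : (Fin (k+1) ⊕ n) ≃ (Unit ⊕ (Fin k ⊕ n)) where
  toFun x := match x with
    | Sum.inl i => Fin.cases (Sum.inl PUnit.unit) (fun j => Sum.inr (Sum.inl j)) i
    | Sum.inr y => Sum.inr (Sum.inr y)
  invFun x := match x with
    | Sum.inl _ => Sum.inl 0
    | Sum.inr (Sum.inl j) => Sum.inl j.succ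
    | Sum.inr (Sum.inr y) => Sum.inr y
  left_inv := by
    rintro (i | y)
    · induction i using Fin.cases <;> simp
    · rfl
  right_inv := by rintro (u | (j | y)) <;> rfl

lemma reindex_peel {n : Type*} (k : ℕ) (a : F) [Fintype n] [DecidableEq n]
    (D : Matrix n n F) :
    (Matrix.reindex (peelEquiv k n) (peelEquiv k n))
        (Matrix.fromBlocks (a • (1 : Matrix (Fin (k+1)) (Fin (k+1)) F)) 0 0 D)
      = Matrix.fromBlocks (a • 1) 0 0
          (Matrix.fromBlocks (a • (1 : Matrix (Fin k) (Fin k) F)) 0 0 D) := by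
  ext i j
  rcases i with iu | (ik | iy) <;> rcases j with ju | (jk | jy) <;>
    simp [peelEquiv, Matrix.one_apply, Fin.succ_ne_zero, (Fin.succ_ne_zero _).symm,
      Fin.succ_inj]

lemma cancel_fin (k : ℕ) {n : Type*} [Fintype n] [DecidableEq n] (p q : F)
    (A B A' B' : Matrix n n F) (S : Matrix (Fin k ⊕ n) (Fin k ⊕ n) F) (hS : IsUnit S)
    (hA : Matrix.fromBlocks (p • 1) 0 0 A * S = S * Matrix.fromBlocks (p • 1) 0 0 A')
    (hB : Matrix.fromBlocks (q • 1) 0 0 B * S = S * Matrix.fromBlocks (q • 1) 0 0 B') :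
    ∃ S₀ : Matrix n n F, IsUnit S₀ ∧ A * S₀ = S₀ * A' ∧ B * S₀ = S₀ * B' := by
  induction k generalizing A B A' B' with
  | zero =>
    set e : (Fin 0 ⊕ n) ≃ n := Equiv.emptySum (Fin 0) n
    have hblk : ∀ (a : F) (D : Matrix n n F),
        (Matrix.reindex e e) (Matrix.fromBlocks (a • 1) 0 0 D) = D := by
      intro a D
      ext i j
      simp [e, Matrix.reindex_apply]
    refine ⟨Matrix.reindex e e S, isUnit_reindex e hS, ?_, ?_⟩
    · have := intertwine_reindex e hA
      rwa [hblk, hblk] at this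
    · have := intertwine_reindex e hB
      rwa [hblk, hblk] at this
  | succ k ih =>
    set e := peelEquiv k n
    have hA' := intertwine_reindex e hA
    have hB' := intertwine_reindex e hB
    rw [reindex_peel, reindex_peel] at hA' hB'
    obtain ⟨S₁, hS₁, hA₁, hB₁⟩ :=
      cancel_unit p q (Matrix.fromBlocks (p • 1) 0 0 A) (Matrix.fromBlocks (q • 1) 0 0 B)
        (Matrix.fromBlocks (p • 1) 0 0 A') (Matrix.fromBlocks (q • 1) 0 0 B')
        (Matrix.reindex e e S) (isUnit_reindex e hS) hA' hB'
    exact ih A B A' B' S₁ hS₁ hA₁ hB₁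


lemma conj_of_intertwine {n : Type*} [Fintype n] [DecidableEq n]
    {S X X' : Matrix n n F} (hS : IsUnit S) (h : X * S = S * X') :
    S⁻¹ * X * S = X' := by
  have hd : IsUnit S.det := (Matrix.isUnit_iff_isUnit_det S).mp hS
  rw [Matrix.mul_assoc, h, ← Matrix.mul_assoc, Matrix.nonsing_inv_mul _ hd, Matrix.one_mul]

lemma intertwine_of_conj {n : Type*} [Fintype n] [DecidableEq n]
    {S X X' : Matrix n n F} (hS : IsUnit S) (h : S⁻¹ * X * S = X') :
    X * S = S * X' := by
  have hd : IsUnit S.det := (Matrix.isUnit_iff_isUnit_det S).mp hS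
  rw [← h, ← Matrix.mul_assoc, ← Matrix.mul_assoc, Matrix.mul_nonsing_inv _ hd, Matrix.one_mul]

lemma M1_blocks {m : ℕ} (A : Matrix (Fin m) (Fin m) F) :
    M1 A = Matrix.fromBlocks ((1:F) • 1) 0 0
      (Matrix.fromBlocks ((0:F) • 1) 0 0 (Matrix.fromBlocks ((1:F) • 1) 0 0 A)) := by
  simp [M1]

lemma M2_blocks {m : ℕ} (l : F) (B : Matrix (Fin m) (Fin m) F) :
    M2 l B = Matrix.fromBlocks ((0:F) • 1) 0 0
      (Matrix.fromBlocks ((1:F) • 1) 0 0 (Matrix.fromBlocks (l • 1) 0 0 B)) := by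
  simp [M2]

end MWS

/-- For `λ ≠ 0`, the pairs `(A, B)` and `(A', B')` of `m × m` matrices are
similar if and only if the pairs `(M₁(A), M₂(B))` and `(M₁(A'), M₂(B'))` of
`(7m+6) × (7m+6)` matrices are weakly similar. -/
theorem similar_iff_M_weaklySimilar (F : Type*) [Field F] (l : F) (hl : l ≠ 0)
    (m : ℕ) (hm : 1 ≤ m) (A B A' B' : Matrix (Fin m) (Fin m) F) :
    (∃ S : Matrix (Fin m) (Fin m) F, IsUnit S ∧
        S⁻¹ * A * S = A' ∧ S⁻¹ * B * S = B') ↔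
      WeaklySimilar (M1 A) (M2 l B) (M1 A') (M2 l B') := by
  constructor
  · rintro ⟨S₀, hS₀, hA, hB⟩
    have hA' : A * S₀ = S₀ * A' := MWS.intertwine_of_conj hS₀ hA
    have hB' : B * S₀ = S₀ * B' := MWS.intertwine_of_conj hS₀ hB
    set S : Matrix (MIdx m) (MIdx m) F :=
      Matrix.fromBlocks 1 0 0 (Matrix.fromBlocks 1 0 0 (Matrix.fromBlocks 1 0 0 S₀)) with hSdef
    have hSunit : IsUnit S := by
      rw [Matrix.isUnit_iff_isUnit_det, hSdef, Matrix.det_fromBlocks_zero₂₁,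
        Matrix.det_fromBlocks_zero₂₁, Matrix.det_fromBlocks_zero₂₁, Matrix.det_one]
      simpa using (Matrix.isUnit_iff_isUnit_det S₀).mp hS₀
    have hiM1 : M1 A * S = S * M1 A' := by
      rw [hSdef]
      unfold M1
      rw [Matrix.fromBlocks_multiply, Matrix.fromBlocks_multiply,
        Matrix.fromBlocks_multiply, Matrix.fromBlocks_multiply,
        Matrix.fromBlocks_multiply, Matrix.fromBlocks_multiply]
      simp [hA']
    have hiM2 : M2 l B * S = S * M2 l B' := by
      rw [hSdef]
      unfold M2
      rw [Matrix.fromBlocks_multiply, Matrix.fromBlocks_multiply,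
        Matrix.fromBlocks_multiply, Matrix.fromBlocks_multiply,
        Matrix.fromBlocks_multiply, Matrix.fromBlocks_multiply]
      simp [hB', Matrix.smul_mul, Matrix.mul_smul]
    refine ⟨S, 1, 0, 0, 1, hSunit, ?_, ?_, ?_⟩
    · rw [← Matrix.one_fin_two]; exact isUnit_one
    · rw [one_smul, zero_smul, add_zero]
      exact MWS.conj_of_intertwine hSunit hiM1
    · rw [one_smul, zero_smul, zero_add]
      exact MWS.conj_of_intertwine hSunit hiM2
  · rintro ⟨S, α, β, γ, δ, hS, hdet, h1, h2⟩
    obtain ⟨hα, hβ, hγ, hδ⟩ := MWS.scalars l hl α β γ δ hdet A B A' B' S hS h1 h2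
    subst hα; subst hβ; subst hγ; subst hδ
    rw [one_smul, zero_smul, add_zero] at h1
    rw [one_smul, zero_smul, zero_add] at h2
    have hi1 : M1 A * S = S * M1 A' := MWS.intertwine_of_conj hS h1
    have hi2 : M2 l B * S = S * M2 l B' := MWS.intertwine_of_conj hS h2
    rw [MWS.M1_blocks A, MWS.M1_blocks A'] at hi1
    rw [MWS.M2_blocks l B, MWS.M2_blocks l B'] at hi2
    obtain ⟨S₁, hS₁, u1, u2⟩ := MWS.cancel_fin (2*m+2) (1:F) (0:F) _ _ _ _ S hS hi1 hi2
    obtain ⟨S₂, hS₂, w1, w2⟩ := MWS.cancel_fin (3*m+3) (0:F) (1:F) _ _ _ _ S₁ hS₁ u1 u2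
    obtain ⟨S₃, hS₃, x1, x2⟩ := MWS.cancel_fin (m+1) (1:F) l _ _ _ _ S₂ hS₂ w1 w2
    exact ⟨S₃, hS₃, MWS.conj_of_intertwine hS₃ x1, MWS.conj_of_intertwine hS₃ x2⟩
end

section
/- Let F be a field, and let V ⊆ F^{n×n} and V' ⊆ F^{n'×n'} be linear subspaces of pairwise commuting matrices, each containing a nonsingular matrix. If the Lie algebras L(V) and L(V') are isomorphic, then n = n' and there exists a nonsingular n×n matrix S over F with SVS^{-1} = V' (i.e., {SAS^{-1} : A ∈ V} = V'). -/
/-- The `(n+1) × (n+1)` matrix `(A|a)` whose top-left `n × n` block is `A`,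
whose last column has the entries of the vector `a` followed by `0`, and whose
last row is zero.  Rows and columns are indexed by `Fin n ⊕ Fin 1`. -/
def Mext {F : Type*} [Field F] {n : ℕ} (A : Matrix (Fin n) (Fin n) F)
    (a : Fin n → F) : Matrix (Fin n ⊕ Fin 1) (Fin n ⊕ Fin 1) F :=
  Matrix.fromBlocks A (Matrix.of fun i _ => a i) 0 0

theorem Mext_add {F : Type*} [Field F] {n : ℕ}
    (A B : Matrix (Fin n) (Fin n) F) (a b : Fin n → F) :
    Mext A a + Mext B b = Mext (A + B) (a + b) := by
  ext (i | i) (j | j) <;>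
    simp [Mext, Matrix.fromBlocks, Matrix.add_apply]

theorem Mext_smul {F : Type*} [Field F] {n : ℕ} (c : F)
    (A : Matrix (Fin n) (Fin n) F) (a : Fin n → F) :
    c • Mext A a = Mext (c • A) (c • a) := by
  ext (i | i) (j | j) <;>
    simp [Mext, Matrix.fromBlocks, Matrix.smul_apply]

theorem Mext_mul {F : Type*} [Field F] {n : ℕ}
    (A B : Matrix (Fin n) (Fin n) F) (a b : Fin n → F) :
    Mext A a * Mext B b = Mext (A * B) (A.mulVec b) := by
  ext (i | i) (j | j) <;>
    simp [Mext, Matrix.mul_apply, Fintype.sum_sum_type,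
      Matrix.fromBlocks, Matrix.mulVec, dotProduct]

/-- The set `Ṽ` of all `(n+1) × (n+1)` matrices `(A|a)` with `A ∈ V`,
`a ∈ Fⁿ`. -/
def VtSet {F : Type*} [Field F] {n : ℕ}
    (V : Submodule F (Matrix (Fin n) (Fin n) F)) :
    Set (Matrix (Fin n ⊕ Fin 1) (Fin n ⊕ Fin 1) F) :=
  {M | ∃ A ∈ V, ∃ a : Fin n → F, M = Mext A a}

attribute [local instance] LieRing.ofAssociativeRing

/-- For a subspace `V` of pairwise commuting `n × n` matrices, the Lie algebra
`L(V) = Ṽ` of all matrices `(A|a)` (`A ∈ V`, `a ∈ Fⁿ`), a Lie subalgebra of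
the `(n+1) × (n+1)` matrices with the commutator bracket. -/
def LV {F : Type*} [Field F] {n : ℕ}
    (V : Submodule F (Matrix (Fin n) (Fin n) F))
    (hV : ∀ A ∈ V, ∀ B ∈ V, A * B = B * A) :
    LieSubalgebra F (Matrix (Fin n ⊕ Fin 1) (Fin n ⊕ Fin 1) F) where
  carrier := VtSet V
  add_mem' := by
    rintro x y ⟨A, hA, a, rfl⟩ ⟨B, hB, b, rfl⟩
    exact ⟨A + B, V.add_mem hA hB, a + b, Mext_add A B a b⟩
  zero_mem' := by
    refine ⟨0, V.zero_mem, 0, ?_⟩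
    ext (i | i) (j | j) <;> simp [Mext, Matrix.fromBlocks]
  smul_mem' := by
    rintro c x ⟨A, hA, a, rfl⟩
    exact ⟨c • A, V.smul_mem c hA, c • a, Mext_smul c A a⟩
  lie_mem' := by
    rintro x y ⟨A, hA, a, rfl⟩ ⟨B, hB, b, rfl⟩
    refine ⟨0, V.zero_mem, A.mulVec b - B.mulVec a, ?_⟩
    rw [Ring.lie_def, Mext_mul, Mext_mul, hV A hA B hB]
    ext (i | i) (j | j) <;>
      simp [Mext, Matrix.fromBlocks, Matrix.sub_apply, Pi.sub_apply]

section Aux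

variable {F : Type*} [Field F]

theorem Mext_sub {n : ℕ} (A B : Matrix (Fin n) (Fin n) F) (a b : Fin n → F) :
    Mext A a - Mext B b = Mext (A - B) (a - b) := by
  ext (i | i) (j | j) <;>
    simp [Mext, Matrix.fromBlocks, Matrix.sub_apply, Pi.sub_apply]

@[simp] theorem Mext_zero {n : ℕ} : (Mext 0 0 : Matrix (Fin n ⊕ Fin 1) (Fin n ⊕ Fin 1) F) = 0 := by
  ext (i | i) (j | j) <;> simp [Mext, Matrix.fromBlocks]

theorem lie_Mext {n : ℕ} (A B : Matrix (Fin n) (Fin n) F) (a b : Fin n → F) :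
    ⁅Mext A a, Mext B b⁆ = Mext (A * B - B * A) (A.mulVec b - B.mulVec a) := by
  rw [Ring.lie_def, Mext_mul, Mext_mul, Mext_sub]

def vecPart {n : ℕ} (M : Matrix (Fin n ⊕ Fin 1) (Fin n ⊕ Fin 1) F) : Fin n → F :=
  fun i => M (Sum.inl i) (Sum.inr 0)

@[simp] theorem vecPart_Mext {n : ℕ} (A : Matrix (Fin n) (Fin n) F) (a : Fin n → F) :
    vecPart (Mext A a) = a := rfl

def blockPart {n : ℕ} (M : Matrix (Fin n ⊕ Fin 1) (Fin n ⊕ Fin 1) F) :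
    Matrix (Fin n) (Fin n) F := Matrix.of fun i j => M (Sum.inl i) (Sum.inl j)

@[simp] theorem blockPart_Mext {n : ℕ} (A : Matrix (Fin n) (Fin n) F) (a : Fin n → F) :
    blockPart (Mext A a) = A := rfl

theorem mulVec_eq_iff {n : ℕ} {A B : Matrix (Fin n) (Fin n) F}
    (h : ∀ c : Fin n → F, A.mulVec c = B.mulVec c) : A = B := by
  ext i j
  have := congrFun (h (Pi.single j 1)) i
  simpa [Matrix.mulVec_single] using this

variable {n : ℕ} {V : Submodule F (Matrix (Fin n) (Fin n) F)}
  {hV : ∀ A ∈ V, ∀ B ∈ V, A * B = B * A}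

/-- the element `(0|a)` of `LV V hV`. -/
def toV (V : Submodule F (Matrix (Fin n) (Fin n) F))
    (hV : ∀ A ∈ V, ∀ B ∈ V, A * B = B * A) (a : Fin n → F) : LV V hV :=
  ⟨Mext 0 a, 0, V.zero_mem, a, rfl⟩

@[simp] theorem coe_toV (a : Fin n → F) :
    ((toV V hV a : LV V hV) : Matrix (Fin n ⊕ Fin 1) (Fin n ⊕ Fin 1) F) = Mext 0 a := rfl

theorem toV_inj {a b : Fin n → F} (h : toV V hV a = toV V hV b) : a = b := by
  have h2 := Subtype.ext_iff.1 h
  have := congrArg vecPart h2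
  simpa using this

/-- every element of the form `(0|a)` satisfies the bracket identity. -/
theorem P_of (x : LV V hV) {a : Fin n → F}
    (hx : (x : Matrix (Fin n ⊕ Fin 1) (Fin n ⊕ Fin 1) F) = Mext 0 a) :
    ∀ y z : LV V hV, ⁅x, ⁅y, z⁆⁆ = 0 := by
  intro y z
  obtain ⟨B, hBV, b, hy⟩ := y.2
  obtain ⟨C, hCV, c, hz⟩ := z.2
  apply Subtype.ext
  rw [LieSubalgebra.coe_bracket, LieSubalgebra.coe_bracket, hx, hy, hz,
    lie_Mext, lie_Mext, hV B hBV C hCV]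
  simp [ZeroMemClass.coe_zero, Matrix.zero_mulVec, Matrix.mulVec_zero, sub_self]

/-- conversely, the bracket identity forces the form `(0|a)`. -/
theorem eq_of_P (hns : ∃ A ∈ V, IsUnit A) (x : LV V hV)
    (h : ∀ y z : LV V hV, ⁅x, ⁅y, z⁆⁆ = 0) :
    ∃ a : Fin n → F, (x : Matrix (Fin n ⊕ Fin 1) (Fin n ⊕ Fin 1) F) = Mext 0 a := by
  obtain ⟨A, hAV, a, hx⟩ := x.2
  refine ⟨a, ?_⟩
  obtain ⟨A0, hA0V, hA0⟩ := hns
  have hA0d : IsUnit A0.det := (Matrix.isUnit_iff_isUnit_det A0).1 hA0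
  have key : ∀ c : Fin n → F, A.mulVec c = 0 := by
    intro c
    have h1 := h ⟨Mext A0 0, A0, hA0V, 0, rfl⟩ (toV V hV (A0⁻¹.mulVec c))
    have h2 : (((⁅(⟨Mext A0 0, A0, hA0V, 0, rfl⟩ : LV V hV),
        toV V hV (A0⁻¹.mulVec c)⁆ : LV V hV)) : Matrix _ _ F) = Mext 0 c := by
      rw [LieSubalgebra.coe_bracket, coe_toV, lie_Mext]
      simp [Matrix.mulVec_mulVec, Matrix.mul_nonsing_inv A0 hA0d]
    have h3 := Subtype.ext_iff.1 h1
    rw [LieSubalgebra.coe_bracket, hx, h2, lie_Mext] at h3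
    have := congrArg vecPart h3
    exact (by simpa using this : A.mulVec c = vecPart 0)
  have hA0' : A = 0 := mulVec_eq_iff (by simpa [Matrix.zero_mulVec] using key)
  rw [hx, hA0']

end Aux

section Aux2

variable {F : Type*} [Field F] {n n' : ℕ}
  {V : Submodule F (Matrix (Fin n) (Fin n) F)}
  {V' : Submodule F (Matrix (Fin n') (Fin n') F)}
  {hV : ∀ A ∈ V, ∀ B ∈ V, A * B = B * A}
  {hV' : ∀ A ∈ V', ∀ B ∈ V', A * B = B * A}

theorem P_map (φ : (LV V hV) ≃ₗ⁅F⁆ (LV V' hV')) (x : LV V hV)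
    (hx : ∀ y z : LV V hV, ⁅x, ⁅y, z⁆⁆ = 0) :
    ∀ y z : LV V' hV', ⁅φ x, ⁅y, z⁆⁆ = 0 := by
  intro y z
  have h0 : φ 0 = 0 := φ.toLinearEquiv.map_zero
  have : ⁅φ x, ⁅φ (φ.symm y), φ (φ.symm z)⁆⁆ = 0 := by
    rw [← LieEquiv.map_lie, ← LieEquiv.map_lie, hx, h0]
  simpa using this

/-- φ maps `(0|a)` to `(0|a')`. -/
theorem phi_toV (hns' : ∃ A ∈ V', IsUnit A)
    (φ : (LV V hV) ≃ₗ⁅F⁆ (LV V' hV')) (a : Fin n → F) :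
    φ (toV V hV a) = toV V' hV' (vecPart ((φ (toV V hV a) : LV V' hV') :
      Matrix (Fin n' ⊕ Fin 1) (Fin n' ⊕ Fin 1) F)) := by
  obtain ⟨a', ha'⟩ := eq_of_P hns' (φ (toV V hV a))
    (P_map φ (toV V hV a) (P_of _ (coe_toV a)))
  apply Subtype.ext
  rw [ha']
  simp [toV, ha']

end Aux2

section Aux3

variable {F : Type*} [Field F] {n n' : ℕ}
  {V : Submodule F (Matrix (Fin n) (Fin n) F)}
  {V' : Submodule F (Matrix (Fin n') (Fin n') F)}
  {hV : ∀ A ∈ V, ∀ B ∈ V, A * B = B * A}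
  {hV' : ∀ A ∈ V', ∀ B ∈ V', A * B = B * A}

@[simp] theorem vecPart_add (M N : Matrix (Fin n ⊕ Fin 1) (Fin n ⊕ Fin 1) F) :
    vecPart (M + N) = vecPart M + vecPart N := rfl

@[simp] theorem vecPart_smul (c : F) (M : Matrix (Fin n ⊕ Fin 1) (Fin n ⊕ Fin 1) F) :
    vecPart (c • M) = c • vecPart M := rfl

theorem toV_add (a b : Fin n → F) :
    toV V hV (a + b) = toV V hV a + toV V hV b := by
  apply Subtype.ext
  simp [toV, Mext_add]

theorem toV_smul (c : F) (a : Fin n → F) :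
    toV V hV (c • a) = c • toV V hV a := by
  apply Subtype.ext
  rw [show ((c • toV V hV a : LV V hV) : Matrix (Fin n ⊕ Fin 1) (Fin n ⊕ Fin 1) F)
    = c • (toV V hV a : Matrix (Fin n ⊕ Fin 1) (Fin n ⊕ Fin 1) F) from rfl]
  simp [toV, Mext_smul]

/-- the induced linear map on the vector parts. -/
def theta (φ : (LV V hV) ≃ₗ⁅F⁆ (LV V' hV')) : (Fin n → F) →ₗ[F] (Fin n' → F) where
  toFun a := vecPart ((φ (toV V hV a) : LV V' hV') :
    Matrix (Fin n' ⊕ Fin 1) (Fin n' ⊕ Fin 1) F)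
  map_add' a b := by
    show vecPart _ = vecPart _ + vecPart _
    have hadd : φ (toV V hV a + toV V hV b) = φ (toV V hV a) + φ (toV V hV b) :=
      φ.toLinearEquiv.map_add _ _
    rw [toV_add, hadd]
    simp
  map_smul' c a := by
    show vecPart _ = _ • vecPart _
    have hsmul : φ (c • toV V hV a) = c • φ (toV V hV a) :=
      φ.toLinearEquiv.map_smul _ _
    rw [toV_smul, hsmul]
    rfl

theorem phi_toV' (hns' : ∃ A ∈ V', IsUnit A)
    (φ : (LV V hV) ≃ₗ⁅F⁆ (LV V' hV')) (a : Fin n → F) :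
    φ (toV V hV a) = toV V' hV' (theta φ a) :=
  phi_toV hns' φ a

theorem theta_theta (hns : ∃ A ∈ V, IsUnit A) (hns' : ∃ A ∈ V', IsUnit A)
    (φ : (LV V hV) ≃ₗ⁅F⁆ (LV V' hV')) (a : Fin n → F) :
    theta φ.symm (theta φ a) = a := by
  apply toV_inj (V := V) (hV := hV)
  rw [← phi_toV' hns φ.symm, ← phi_toV' hns' φ]
  exact φ.symm_apply_apply _

/-- the intertwining property. -/
theorem conj_step (hns' : ∃ A ∈ V', IsUnit A)
    (φ : (LV V hV) ≃ₗ⁅F⁆ (LV V' hV')) (A : Matrix (Fin n) (Fin n) F) (hA : A ∈ V) :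
    ∃ A' ∈ V', ∀ b : Fin n → F,
      A'.mulVec (theta φ b) = theta φ (A.mulVec b) := by
  set x : LV V hV := ⟨Mext A 0, A, hA, 0, rfl⟩ with hxdef
  obtain ⟨A', hA', a', hval⟩ := (φ x).2
  refine ⟨A', hA', fun b => ?_⟩
  have hb : ⁅x, toV V hV b⁆ = toV V hV (A.mulVec b) := by
    apply Subtype.ext
    rw [LieSubalgebra.coe_bracket, coe_toV, coe_toV, hxdef, lie_Mext]
    simp
  have h1 : ⁅φ x, toV V' hV' (theta φ b)⁆ = toV V' hV' (theta φ (A.mulVec b)) := by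
    rw [← phi_toV' hns' φ, ← LieEquiv.map_lie, hb, phi_toV' hns' φ]
  have h2 := Subtype.ext_iff.1 h1
  rw [LieSubalgebra.coe_bracket, hval, coe_toV, coe_toV, lie_Mext] at h2
  have h3 := congrArg vecPart h2
  simpa using h3

end Aux3
/-- If the Lie algebras `L(V)` and `L(V')` of two subspaces of pairwise
commuting matrices, each containing a nonsingular matrix, are isomorphic, then
`n = n'` and `V` and `V'` are similar: `SVS⁻¹ = V'` for some nonsingular `S`. -/
theorem LV_iso_implies_similar (F : Type*) [Field F] (n n' : ℕ)
    (V : Submodule F (Matrix (Fin n) (Fin n) F))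
    (V' : Submodule F (Matrix (Fin n') (Fin n') F))
    (hV : ∀ A ∈ V, ∀ B ∈ V, A * B = B * A)
    (hV' : ∀ A ∈ V', ∀ B ∈ V', A * B = B * A)
    (hns : ∃ A ∈ V, IsUnit A) (hns' : ∃ A ∈ V', IsUnit A)
    (hiso : Nonempty ((LV V hV) ≃ₗ⁅F⁆ (LV V' hV'))) :
    ∃ h : n = n', ∃ S : Matrix (Fin n') (Fin n') F, IsUnit S ∧
      (fun A => S * (Matrix.reindex (finCongr h) (finCongr h) A) * S⁻¹) '' ↑V
        = (↑V' : Set (Matrix (Fin n') (Fin n') F)) := by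
  obtain ⟨φ⟩ := hiso
  have hth : ∀ a, theta φ.symm (theta φ a) = a := theta_theta hns hns' φ
  have hth' : ∀ a, theta φ (theta φ.symm a) = a := by
    intro a
    have h1 := theta_theta hns' hns φ.symm a
    rwa [show φ.symm.symm = φ from rfl] at h1
  let e : (Fin n → F) ≃ₗ[F] (Fin n' → F) :=
    LinearEquiv.ofLinear (theta φ) (theta φ.symm)
      (LinearMap.ext hth') (LinearMap.ext hth)
  have h : n = n' := by
    have h1 := e.finrank_eq
    rwa [Module.finrank_fin_fun, Module.finrank_fin_fun] at h1
  subst h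
  set S : Matrix (Fin n) (Fin n) F := LinearMap.toMatrix' (theta φ) with hSdef
  set S' : Matrix (Fin n) (Fin n) F := LinearMap.toMatrix' (theta φ.symm) with hS'def
  have hSmul : ∀ a, S.mulVec a = theta φ a := fun a => by
    rw [hSdef, ← Matrix.toLin'_apply, Matrix.toLin'_toMatrix']
  have hS'mul : ∀ a, S'.mulVec a = theta φ.symm a := fun a => by
    rw [hS'def, ← Matrix.toLin'_apply, Matrix.toLin'_toMatrix']
  have hSS' : S * S' = 1 := by
    rw [hSdef, hS'def, ← LinearMap.toMatrix'_comp,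
      show (theta φ) ∘ₗ (theta φ.symm) = LinearMap.id from LinearMap.ext hth',
      LinearMap.toMatrix'_id]
  have hSd : IsUnit S.det :=
    IsUnit.of_mul_eq_one _ (by rw [← Matrix.det_mul, hSS', Matrix.det_one])
  have hSu : IsUnit S := (Matrix.isUnit_iff_isUnit_det S).2 hSd
  have hSinv : S⁻¹ = S' := Matrix.inv_eq_right_inv hSS'
  refine ⟨rfl, S, hSu, ?_⟩
  simp only [finCongr_refl, Matrix.reindex_apply, Equiv.refl_symm, Equiv.coe_refl,
    Matrix.submatrix_id_id]
  ext A'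
  simp only [Set.mem_image, SetLike.mem_coe]
  constructor
  · rintro ⟨A, hA, rfl⟩
    obtain ⟨A'', hA'', hint⟩ := conj_step hns' φ A hA
    have hAS : A'' * S = S * A := by
      apply mulVec_eq_iff
      intro c
      rw [← Matrix.mulVec_mulVec, ← Matrix.mulVec_mulVec, hSmul, hint, ← hSmul]
    have heq : S * A * S⁻¹ = A'' := by
      rw [hSinv, ← hAS, mul_assoc, hSS', mul_one]
    rw [heq]; exact hA''
  · intro hA'
    obtain ⟨A, hA, hint⟩ := conj_step hns φ.symm A' hA'
    refine ⟨A, hA, ?_⟩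
    have hAS : A * S' = S' * A' := by
      apply mulVec_eq_iff
      intro c
      rw [← Matrix.mulVec_mulVec, ← Matrix.mulVec_mulVec, hS'mul, hint, ← hS'mul]
    rw [hSinv, mul_assoc, hAS, ← mul_assoc, hSS', one_mul]
end
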